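/- Let L be a finite lattice with minimum element 0̂ and maximum element 1̂, and let μ denote the Möbius function of L. If B ⊆ L \ {1̂} is an upper crosscut of L (i.e., for every y ∈ L not in B ∪ {1̂} there exists x ∈ B with x > y), then μ(0̂, 1̂) equals the sum of (-1)^|E| over all subsets E of B whose meet (infimum) equals 0̂. -/
import Mathlib


open scoped Classical

/-- Rota's crosscut theorem, upper-crosscut form: if `B` is an upper crosscut of a
finite lattice `L`, then `μ(⊥,⊤) = ∑ (-1)^|E|` over subsets `E ⊆ B` with meet `⊥`. -/
theorem stmt5 (L : Type) [Lattice L] [BoundedOrder L] [Fintype L]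
    (μ : L → L → ℤ)
    (hμ : ∀ x y : L, x ≤ y →
      (∑ᶠ z ∈ {z : L | x ≤ z ∧ z ≤ y}, μ x z) = if x = y then 1 else 0)
    (B : Set L) (hB : ⊤ ∉ B)
    (hcross : ∀ y : L, y ∉ B → y ≠ ⊤ → ∃ x ∈ B, y < x) :
    μ ⊥ ⊤ = ∑ᶠ E ∈ {E : Finset L | ↑E ⊆ B ∧ E.inf id = ⊥}, (-1 : ℤ) ^ E.card := by
  classical
  -- Möbius relation in Finset form
  have hμ' : ∀ x y : L, x ≤ y →
      (∑ z ∈ Finset.univ.filter (fun z => x ≤ z ∧ z ≤ y), μ x z)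
        = if x = y then 1 else 0 := by
    intro x y h
    rw [← hμ x y h, ← finsum_mem_coe_finset]
    congr 1
    ext z; simp
  -- key lemma: alternating sum over E ⊆ B with y ≤ inf E
  have key : ∀ y : L,
      (∑ E ∈ Finset.univ.filter (fun E : Finset L => ↑E ⊆ B ∧ y ≤ E.inf id),
        (-1 : ℤ) ^ E.card) = if y = ⊤ then 1 else 0 := by
    intro y
    have hset : Finset.univ.filter (fun E : Finset L => ↑E ⊆ B ∧ y ≤ E.inf id)
        = (Finset.univ.filter (fun x : L => x ∈ B ∧ y ≤ x)).powerset := by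
      ext E
      simp only [Finset.mem_filter, Finset.mem_univ, true_and, Finset.mem_powerset]
      constructor
      · rintro ⟨h1, h2⟩ x hx
        exact Finset.mem_filter.mpr ⟨Finset.mem_univ x,
          h1 (Finset.mem_coe.mpr hx), Finset.le_inf_iff.mp h2 x hx⟩
      · intro h
        refine ⟨fun x hx => (Finset.mem_filter.mp (h (Finset.mem_coe.mp hx))).2.1,
          Finset.le_inf fun x hx => (Finset.mem_filter.mp (h hx)).2.2⟩
    rw [hset, Finset.sum_powerset_neg_one_pow_card]
    congr 1
    simp only [Finset.eq_empty_iff_forall_notMem, Finset.mem_filter, Finset.mem_univ,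
      true_and, not_and, eq_iff_iff]
    constructor
    · intro h
      by_contra hy
      by_cases hyB : y ∈ B
      · exact h y hyB le_rfl
      · obtain ⟨x, hxB, hyx⟩ := hcross y hyB hy
        exact h x hxB hyx.le
    · intro hy x hxB hle
      subst hy
      exact hB (top_le_iff.mp hle ▸ hxB)
  -- convert the goal's finsum to a Finset sum
  have hgoal : (∑ᶠ E ∈ {E : Finset L | ↑E ⊆ B ∧ E.inf id = ⊥}, (-1 : ℤ) ^ E.card)
      = ∑ E ∈ Finset.univ.filter (fun E : Finset L => ↑E ⊆ B ∧ E.inf id = ⊥),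
          (-1 : ℤ) ^ E.card := by
    rw [← finsum_mem_coe_finset]
    congr 1
    ext E; simp
  rw [hgoal]
  -- inner sum over y for a fixed E
  have inner : ∀ E : Finset L,
      (∑ y ∈ Finset.univ,
        (if ↑E ⊆ B ∧ y ≤ E.inf id then μ ⊥ y * (-1 : ℤ) ^ E.card else 0))
      = if ↑E ⊆ B ∧ E.inf id = ⊥ then (-1 : ℤ) ^ E.card else 0 := by
    intro E
    by_cases hEB : (↑E : Set L) ⊆ B
    · simp only [hEB, true_and]
      rw [← Finset.sum_filter, ← Finset.sum_mul]
      have hf : Finset.univ.filter (fun y : L => y ≤ E.inf id)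
          = Finset.univ.filter (fun y : L => ⊥ ≤ y ∧ y ≤ E.inf id) := by
        simp
      rw [hf, hμ' ⊥ (E.inf id) bot_le]
      by_cases hb : E.inf id = ⊥
      · simp [hb]
      · rw [if_neg (fun h => hb h.symm), if_neg hb, zero_mul]
    · simp [hEB]
  calc μ ⊥ ⊤ = ∑ y ∈ Finset.univ, μ ⊥ y * (if y = ⊤ then 1 else 0) := by
        simp [mul_ite]
    _ = ∑ y ∈ Finset.univ, μ ⊥ y *
          (∑ E ∈ (Finset.univ : Finset (Finset L)),
            (if ↑E ⊆ B ∧ y ≤ E.inf id then (-1 : ℤ) ^ E.card else 0)) := by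
        refine Finset.sum_congr rfl fun y _ => ?_
        rw [← key y, Finset.sum_filter]
    _ = ∑ y ∈ Finset.univ, ∑ E ∈ (Finset.univ : Finset (Finset L)),
          (if ↑E ⊆ B ∧ y ≤ E.inf id then μ ⊥ y * (-1 : ℤ) ^ E.card else 0) := by
        refine Finset.sum_congr rfl fun y _ => ?_
        rw [Finset.mul_sum]
        exact Finset.sum_congr rfl fun E _ => by rw [mul_ite, mul_zero]
    _ = ∑ E ∈ (Finset.univ : Finset (Finset L)), ∑ y ∈ Finset.univ,
          (if ↑E ⊆ B ∧ y ≤ E.inf id then μ ⊥ y * (-1 : ℤ) ^ E.card else 0) :=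
        Finset.sum_comm
    _ = ∑ E ∈ (Finset.univ : Finset (Finset L)),
          (if ↑E ⊆ B ∧ E.inf id = ⊥ then (-1 : ℤ) ^ E.card else 0) :=
        Finset.sum_congr rfl fun E _ => inner E
    _ = ∑ E ∈ Finset.univ.filter (fun E : Finset L => ↑E ⊆ B ∧ E.inf id = ⊥),
          (-1 : ℤ) ^ E.card := (Finset.sum_filter _ _).symm
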